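/- For every t ∈ [0,T), the function γ is integrable on the interval (t,T) and exp(∫_t^T γ(s) ds) = β(t); equivalently, ∫_t^T γ(s) ds = log β(t). -/

import Mathlib

open MeasureTheory Real Set Filter

/-- Standard normal cdf `N(x)`. -/
noncomputable def stdCdf (x : ℝ) : ℝ := ∫ y in Set.Iic x, Real.exp (-y ^ 2 / 2) / Real.sqrt (2 * Real.pi)

/-- Standard normal pdf `n(x)`. -/
noncomputable def stdPdf (x : ℝ) : ℝ := Real.exp (-x ^ 2 / 2) / Real.sqrt (2 * Real.pi)

/-- `β(t) = 1 + (2σ/√(2δ+σ²))·(N(√((2δ+σ²)(T−t))) − 1/2)`. -/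
noncomputable def betaIR (T σ δ t : ℝ) : ℝ :=
  1 + 2 * σ / Real.sqrt (2 * δ + σ ^ 2) *
    (stdCdf (Real.sqrt ((2 * δ + σ ^ 2) * (T - t))) - 1 / 2)

/-- `γ(t) = σ·n(√((2δ+σ²)(T−t)))/(√(T−t)·β(t))`. -/
noncomputable def gammaIR (T σ δ t : ℝ) : ℝ :=
  σ * stdPdf (Real.sqrt ((2 * δ + σ ^ 2) * (T - t))) / (Real.sqrt (T - t) * betaIR T σ δ t)

lemma stdPdf_cont : Continuous stdPdf := by unfold stdPdf; fun_prop

lemma stdPdf_integrable : Integrable stdPdf := by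
  have h : Integrable (fun y : ℝ => Real.exp (-(1/2) * y ^ 2)) := integrable_exp_neg_mul_sq (by norm_num)
  have := h.div_const (Real.sqrt (2*Real.pi))
  unfold stdPdf
  convert this using 2 with y
  ring_nf

lemma stdPdf_pos (x : ℝ) : 0 < stdPdf x := by
  unfold stdPdf
  positivity

lemma stdPdf_le (x : ℝ) : stdPdf x ≤ 1 / Real.sqrt (2 * Real.pi) := by
  unfold stdPdf
  have h1 : Real.exp (-x^2/2) ≤ 1 := by
    rw [Real.exp_le_one_iff]; nlinarith [sq_nonneg x]
  have h2 : (0:ℝ) < Real.sqrt (2*Real.pi) := by positivity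
  exact div_le_div_of_nonneg_right h1 h2.le |>.trans_eq rfl

lemma integral_stdPdf : ∫ y, stdPdf y = 1 := by
  unfold stdPdf
  rw [integral_div]
  have : ∫ y : ℝ, Real.exp (-y ^ 2 / 2) = Real.sqrt (2 * Real.pi) := by
    have := integral_gaussian (1/2)
    simp only [show ∀ y : ℝ, -(1/2) * y ^ 2 = -y^2/2 from fun y => by ring] at this
    rw [this]
    rw [div_div_eq_mul_div, div_one, mul_comm]
  rw [this, div_self (by positivity)]

lemma stdCdf_zero : stdCdf 0 = 1/2 := by
  have hi : Integrable stdPdf := stdPdf_integrable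
  have h1 : stdCdf 0 = ∫ y in Set.Iic (0:ℝ), stdPdf y := rfl
  have heven : ∫ y in Set.Iic (0:ℝ), stdPdf y = ∫ y in Set.Ioi (0:ℝ), stdPdf y := by
    have := integral_comp_neg_Iic (0:ℝ) stdPdf
    rw [neg_zero] at this
    rw [← this]
    congr 1
    funext y
    unfold stdPdf
    ring_nf
  have hsum := intervalIntegral.integral_Iic_add_Ioi (b := (0:ℝ)) hi.integrableOn hi.integrableOn
  rw [integral_stdPdf] at hsum
  rw [h1]
  linarith [heven, hsum]

lemma stdCdf_eq (x : ℝ) : stdCdf x = stdCdf 0 + ∫ y in (0:ℝ)..x, stdPdf y := by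
  have := intervalIntegral.integral_Iic_sub_Iic (f := stdPdf) (μ := volume) (a := (0:ℝ)) (b := x)
    stdPdf_integrable.integrableOn stdPdf_integrable.integrableOn
  have h1 : stdCdf x = ∫ y in Set.Iic x, stdPdf y := rfl
  have h2 : stdCdf 0 = ∫ y in Set.Iic (0:ℝ), stdPdf y := rfl
  rw [h1, h2]; linarith

lemma stdCdf_hasDerivAt (x : ℝ) : HasDerivAt stdCdf (stdPdf x) x := by
  have : stdCdf = fun u => stdCdf 0 + ∫ y in (0:ℝ)..u, stdPdf y := funext stdCdf_eq
  rw [this]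
  exact (intervalIntegral.integral_hasDerivAt_right
    (stdPdf_cont.intervalIntegrable _ _)
    (stdPdf_cont.stronglyMeasurable.stronglyMeasurableAtFilter)
    stdPdf_cont.continuousAt).const_add _

lemma stdCdf_ge_half {x : ℝ} (hx : 0 ≤ x) : 1/2 ≤ stdCdf x := by
  rw [← stdCdf_zero, stdCdf_eq x]
  have : 0 ≤ ∫ y in (0:ℝ)..x, stdPdf y :=
    intervalIntegral.integral_nonneg hx (fun y _ => (stdPdf_pos y).le)
  linarith

lemma stdCdf_continuous : Continuous stdCdf :=
  continuous_iff_continuousAt.mpr fun x => (stdCdf_hasDerivAt x).continuousAt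

lemma betaIR_ge_one {T σ δ : ℝ} (hσ : 0 ≤ σ) (s : ℝ) : 1 ≤ betaIR T σ δ s := by
  unfold betaIR
  have h := stdCdf_ge_half (Real.sqrt_nonneg ((2 * δ + σ ^ 2) * (T - s)))
  have h2 : 0 ≤ 2 * σ / Real.sqrt (2 * δ + σ ^ 2) := by positivity
  nlinarith

lemma betaIR_at_T {T σ δ : ℝ} : betaIR T σ δ T = 1 := by
  unfold betaIR
  rw [sub_self, mul_zero, Real.sqrt_zero, stdCdf_zero]
  ring

lemma betaIR_continuous (T σ δ : ℝ) : Continuous (betaIR T σ δ) := by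
  have h : Continuous fun s => stdCdf (Real.sqrt ((2 * δ + σ ^ 2) * (T - s))) :=
    stdCdf_continuous.comp (by fun_prop)
  unfold betaIR
  exact continuous_const.add (continuous_const.mul (h.sub continuous_const))

lemma betaIR_hasDerivAt {T σ δ s : ℝ} (ha : 0 < 2 * δ + σ ^ 2) (hs : s < T) :
    HasDerivAt (betaIR T σ δ)
      (-(σ * stdPdf (Real.sqrt ((2 * δ + σ ^ 2) * (T - s))) / Real.sqrt (T - s))) s := by
  set a := 2 * δ + σ ^ 2 with ha_def
  have hTs : 0 < T - s := sub_pos.mpr hs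
  have haTs : 0 < a * (T - s) := by positivity
  have h1 : HasDerivAt (fun u : ℝ => a * (T - u)) (a * -1) s :=
    ((hasDerivAt_id s).const_sub T).const_mul a
  have h2 : HasDerivAt Real.sqrt (1 / (2 * Real.sqrt (a * (T - s)))) (a * (T - s)) :=
    Real.hasDerivAt_sqrt haTs.ne'
  have h3 := h2.comp s h1
  have h4 := (stdCdf_hasDerivAt (Real.sqrt (a * (T - s)))).comp s h3
  have h5 := ((h4.sub_const (1/2)).const_mul (2 * σ / Real.sqrt a)).const_add 1
  have hsq : Real.sqrt (a * (T - s)) = Real.sqrt a * Real.sqrt (T - s) := Real.sqrt_mul ha.le _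
  have hsTs : 0 < Real.sqrt (T - s) := Real.sqrt_pos.mpr hTs
  have hsa : 0 < Real.sqrt a := Real.sqrt_pos.mpr ha
  have haa : Real.sqrt a * Real.sqrt a = a := Real.mul_self_sqrt ha.le
  refine h5.congr_deriv ?_
  symm
  rw [hsq]
  rw [show a * -1 = -(Real.sqrt a * Real.sqrt a) by rw [haa]; ring]
  field_simp


theorem gammaIR_integral (T σ δ : ℝ) (hT : 0 < T) (hσ : 0 < σ) (hδ : 0 ≤ δ)
    (t : ℝ) (ht0 : 0 ≤ t) (htT : t < T) :
    IntegrableOn (gammaIR T σ δ) (Set.Ioo t T) ∧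
      Real.exp (∫ s in t..T, gammaIR T σ δ s) = betaIR T σ δ t ∧
      ∫ s in t..T, gammaIR T σ δ s = Real.log (betaIR T σ δ t) := by
  have ha : (0:ℝ) < 2 * δ + σ ^ 2 := by positivity
  have hβpos : ∀ s : ℝ, 0 < betaIR T σ δ s := fun s =>
    lt_of_lt_of_le one_pos (betaIR_ge_one hσ.le s)
  -- derivative of -log β
  have hderiv : ∀ s ∈ Set.Ioo t T,
      HasDerivAt (fun u => -Real.log (betaIR T σ δ u)) (gammaIR T σ δ s) s := by
    intro s hs
    have hTs : 0 < T - s := sub_pos.mpr hs.2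
    have hsTs : 0 < Real.sqrt (T - s) := Real.sqrt_pos.mpr hTs
    have hb := betaIR_hasDerivAt (T := T) (σ := σ) (δ := δ) ha hs.2
    have hlog := ((Real.hasDerivAt_log (hβpos s).ne').comp s hb).neg
    refine hlog.congr_deriv ?_
    symm
    unfold gammaIR
    field_simp
  have hcont : ContinuousOn (fun u => -Real.log (betaIR T σ δ u)) (Set.Icc t T) :=
    (((betaIR_continuous T σ δ).continuousOn).log (fun s _ => (hβpos s).ne')).neg
  -- integrability
  have hmeas : ContinuousOn (gammaIR T σ δ) (Set.Ioo t T) := by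
    unfold gammaIR
    apply ContinuousOn.div
    · exact (continuous_const.mul
        (stdPdf_cont.comp (Real.continuous_sqrt.comp (by fun_prop)))).continuousOn
    · exact ((Real.continuous_sqrt.comp (by fun_prop)).mul (betaIR_continuous T σ δ)).continuousOn
    · intro s hs
      have hTs : 0 < T - s := sub_pos.mpr hs.2
      exact (mul_pos (Real.sqrt_pos.mpr hTs) (hβpos s)).ne'
  have hbound : IntegrableOn (fun s => σ / Real.sqrt (2 * Real.pi) * (T - s) ^ (-(1/2) : ℝ))
      (Set.Ioo t T) := by
    have h0 : IntervalIntegrable (fun x : ℝ => x ^ (-(1/2) : ℝ)) volume 0 (T - t) :=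
      intervalIntegral.intervalIntegrable_rpow' (by norm_num)
    have h1 := (h0.comp_sub_left T).symm
    rw [sub_zero, sub_sub_cancel] at h1
    have h2 := (intervalIntegrable_iff_integrableOn_Ioo_of_le htT.le).mp h1
    exact h2.const_mul _
  have hint : IntegrableOn (gammaIR T σ δ) (Set.Ioo t T) := by
    apply Integrable.mono' hbound (hmeas.aestronglyMeasurable measurableSet_Ioo)
    filter_upwards [ae_restrict_mem measurableSet_Ioo] with s hs
    have hTs : 0 < T - s := sub_pos.mpr hs.2
    have hsTs : 0 < Real.sqrt (T - s) := Real.sqrt_pos.mpr hTs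
    have hγnn : 0 ≤ gammaIR T σ δ s := by
      unfold gammaIR
      exact div_nonneg (mul_nonneg hσ.le (stdPdf_pos _).le)
        (mul_nonneg (Real.sqrt_nonneg _) (hβpos s).le)
    rw [Real.norm_of_nonneg hγnn]
    have hrpow : (T - s) ^ (-(1/2) : ℝ) = (Real.sqrt (T - s))⁻¹ := by
      rw [Real.rpow_neg hTs.le, Real.sqrt_eq_rpow]
    rw [hrpow]
    have key : gammaIR T σ δ s ≤ (σ / Real.sqrt (2 * Real.pi)) / Real.sqrt (T - s) := by
      unfold gammaIR
      apply div_le_div₀ (by positivity)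
      · calc σ * stdPdf (Real.sqrt ((2 * δ + σ ^ 2) * (T - s)))
            ≤ σ * (1 / Real.sqrt (2 * Real.pi)) := by
              exact mul_le_mul_of_nonneg_left (stdPdf_le _) hσ.le
          _ = σ / Real.sqrt (2 * Real.pi) := by ring
      · exact hsTs
      · calc Real.sqrt (T - s) = Real.sqrt (T - s) * 1 := (mul_one _).symm
          _ ≤ Real.sqrt (T - s) * betaIR T σ δ s :=
              mul_le_mul_of_nonneg_left (betaIR_ge_one hσ.le s) hsTs.le
    calc gammaIR T σ δ s ≤ (σ / Real.sqrt (2 * Real.pi)) / Real.sqrt (T - s) := key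
      _ = σ / Real.sqrt (2 * Real.pi) * (Real.sqrt (T - s))⁻¹ := by ring
  have hII : IntervalIntegrable (gammaIR T σ δ) volume t T :=
    (intervalIntegrable_iff_integrableOn_Ioo_of_le htT.le).mpr hint
  have hFTC := intervalIntegral.integral_eq_sub_of_hasDerivAt_of_le htT.le hcont hderiv hII
  rw [betaIR_at_T, Real.log_one, neg_zero, zero_sub, neg_neg] at hFTC
  exact ⟨hint, by rw [hFTC]; exact Real.exp_log (hβpos t), hFTC⟩
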